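/- arXiv:math/0612447 — 2 statements merged into one kernel-verified Lean document; each statement's English description precedes it below -/
import Mathlib

section
/- Let p, q, r ≥ 1, let a ≤ min(p, r) and b ≤ min(q, r) be natural numbers with a + b ≤ r, and let c₁, …, c_a and d₁, …, d_b be natural-number exponents. Then the polynomial P(X, Y) = Δ₁(X)^{c₁} ⋯ Δ_a(X)^{c_a} · ~Δ₁(Y)^{d₁} ⋯ ~Δ_b(Y)^{d_b} in the entries of X ∈ M_{p×r} and Y ∈ M_{q×r} is harmonic: Δ_{ij} P = 0 for all 1 ≤ i ≤ p and 1 ≤ j ≤ q. -/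
/-!
Products of powers of the leading principal minors `Δⱼ(X)`, `j ≤ a`, and of the
trailing minors `~Δⱼ(Y)`, `j ≤ b`, with `a + b ≤ r`, are harmonic for all the
operators `Δ_{ij} = Σ_ν ∂²/∂X_{iν}∂Y_{jν}`.
-/

open MvPolynomial

/-- The leading principal `j×j` minor of a `p×r` matrix. -/
def leadMinor {R : Type*} [CommRing R] {p r : ℕ} (j : ℕ) (hjp : j ≤ p) (hjr : j ≤ r)
    (X : Matrix (Fin p) (Fin r) R) : R :=
  (Matrix.of fun k l : Fin j => X (Fin.castLE hjp k) (Fin.castLE hjr l)).det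

/-- The trailing `j×j` minor of a `q×r` matrix: the determinant of the
bottom-right `j×j` submatrix `(Y_{q−j+k, r−j+l})`. -/
def trailMinor {R : Type*} [CommRing R] {q r : ℕ} (j : ℕ) (hjq : j ≤ q) (hjr : j ≤ r)
    (Y : Matrix (Fin q) (Fin r) R) : R :=
  (Matrix.of fun k l : Fin j =>
    Y ⟨q - j + k, by have := k.isLt; omega⟩ ⟨r - j + l, by have := l.isLt; omega⟩).det

/-- The generic matrix `X` of variables `X_{iν}`. -/
noncomputable def genX (R : Type*) [CommRing R] (p q r : ℕ) :
    Matrix (Fin p) (Fin r) (MvPolynomial ((Fin p × Fin r) ⊕ (Fin q × Fin r)) R) :=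
  Matrix.of fun i ν => X (Sum.inl (i, ν))

/-- The generic matrix `Y` of variables `Y_{jν}`. -/
noncomputable def genY (R : Type*) [CommRing R] (p q r : ℕ) :
    Matrix (Fin q) (Fin r) (MvPolynomial ((Fin p × Fin r) ⊕ (Fin q × Fin r)) R) :=
  Matrix.of fun j ν => X (Sum.inr (j, ν))

lemma pderiv_mem_supported {σ R : Type*} [CommRing R] {S : Set σ} (n : σ)
    {f : MvPolynomial σ R} (hf : f ∈ MvPolynomial.supported R S) :
    MvPolynomial.pderiv n f ∈ MvPolynomial.supported R S := by
  classical
  rw [MvPolynomial.supported_eq_adjoin_X] at hf ⊢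
  induction hf using Algebra.adjoin_induction with
  | mem x hx =>
    obtain ⟨i, hi, rfl⟩ := hx
    by_cases h : i = n
    · subst h; rw [pderiv_X_self]; exact one_mem _
    · rw [pderiv_X_of_ne h]; exact zero_mem _
  | algebraMap r =>
    rw [MvPolynomial.algebraMap_eq, pderiv_C]; exact zero_mem _
  | add x y hx hy ihx ihy => rw [map_add]; exact add_mem ihx ihy
  | mul x y hx hy ihx ihy =>
    rw [pderiv_mul]
    exact add_mem (mul_mem ihx hy) (mul_mem hx ihy)

lemma pderiv_eq_zero_of_supported {σ R : Type*} [CommRing R] {S : Set σ} {n : σ}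
    (hn : n ∉ S) {f : MvPolynomial σ R} (hf : f ∈ MvPolynomial.supported R S) :
    MvPolynomial.pderiv n f = 0 := by
  rw [MvPolynomial.mem_supported] at hf
  exact pderiv_eq_zero_of_notMem_vars fun h => hn (hf h)

lemma det_mem_subalgebra {R A : Type*} [CommRing R] [CommRing A] [Algebra R A]
    {n : ℕ} (M : Matrix (Fin n) (Fin n) A) (S : Subalgebra R A)
    (h : ∀ i j, M i j ∈ S) : M.det ∈ S := by
  rw [Matrix.det_apply]
  refine Subalgebra.sum_mem _ fun σ _ => ?_
  rw [Units.smul_def, zsmul_eq_mul]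
  exact mul_mem (S.intCast_mem _) (Subalgebra.prod_mem _ fun i _ => h _ _)

/-- The polynomial `P(X,Y) = Δ₁(X)^{c₁}⋯Δ_a(X)^{c_a} · ~Δ₁(Y)^{d₁}⋯~Δ_b(Y)^{d_b}`
is harmonic: `Δ_{ij} P = 0` for all `i`, `j`, provided `a ≤ min(p,r)`,
`b ≤ min(q,r)` and `a + b ≤ r`. -/
theorem minor_product_harmonic {R : Type*} [CommRing R]
    (p q r a b : ℕ) (hp : 1 ≤ p) (hq : 1 ≤ q) (hr : 1 ≤ r)
    (hap : a ≤ p) (har : a ≤ r) (hbq : b ≤ q) (hbr : b ≤ r) (hab : a + b ≤ r)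
    (c : Fin a → ℕ) (d : Fin b → ℕ) :
    ∀ (i : Fin p) (j : Fin q),
      (∑ ν : Fin r,
        (pderiv (Sum.inl (i, ν)))
          ((pderiv (Sum.inr (j, ν)))
            ((∏ k : Fin a,
                (leadMinor (k + 1) (by have := k.isLt; omega) (by have := k.isLt; omega)
                  (genX R p q r)) ^ (c k)) *
             (∏ k : Fin b,
                (trailMinor (k + 1) (by have := k.isLt; omega) (by have := k.isLt; omega)
                  (genY R p q r)) ^ (d k))))) = 0 := by
  intro i j
  set SX : Set ((Fin p × Fin r) ⊕ (Fin q × Fin r)) :=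
    {s | ∃ t : Fin p × Fin r, (t.2 : ℕ) < a ∧ s = Sum.inl t} with hSX
  set SY : Set ((Fin p × Fin r) ⊕ (Fin q × Fin r)) :=
    {s | ∃ t : Fin q × Fin r, r - b ≤ (t.2 : ℕ) ∧ s = Sum.inr t} with hSY
  set F := (∏ k : Fin a,
      (leadMinor (k + 1) (by have := k.isLt; omega) (by have := k.isLt; omega)
        (genX R p q r)) ^ (c k)) with hF
  set G := (∏ k : Fin b,
      (trailMinor (k + 1) (by have := k.isLt; omega) (by have := k.isLt; omega)
        (genY R p q r)) ^ (d k)) with hG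
  have hFmem : F ∈ MvPolynomial.supported R SX := by
    refine Subalgebra.prod_mem _ fun k _ => pow_mem ?_ _
    refine det_mem_subalgebra _ _ fun k' l' => ?_
    rw [MvPolynomial.supported_eq_adjoin_X]
    refine Algebra.subset_adjoin ⟨_, ?_, rfl⟩
    exact ⟨_, by simpa using l'.isLt.trans_le (by omega), rfl⟩
  have hGmem : G ∈ MvPolynomial.supported R SY := by
    refine Subalgebra.prod_mem _ fun k _ => pow_mem ?_ _
    refine det_mem_subalgebra _ _ fun k' l' => ?_
    rw [MvPolynomial.supported_eq_adjoin_X]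
    refine Algebra.subset_adjoin ⟨_, ?_, rfl⟩
    refine ⟨_, ?_, rfl⟩
    show r - b ≤ r - (↑k + 1) + ↑l'
    have := k.isLt
    omega
  refine Finset.sum_eq_zero fun ν _ => ?_
  have hFr : pderiv (Sum.inr (j, ν)) F = 0 := by
    refine pderiv_eq_zero_of_supported ?_ hFmem
    rintro ⟨t, -, h⟩; cases h
  rw [pderiv_mul, hFr, zero_mul, zero_add]
  rw [pderiv_mul]
  by_cases hν : (ν : ℕ) < a
  · have hGz : pderiv (Sum.inr (j, ν)) G = 0 := by
      refine pderiv_eq_zero_of_supported ?_ hGmem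
      rintro ⟨t, ht, h⟩
      obtain rfl : t = (j, ν) := (Sum.inr.inj h).symm
      have : r - b ≤ (ν : ℕ) := ht
      omega
    rw [hGz]; simp
  · have h1 : pderiv (Sum.inl (i, ν)) F = 0 := by
      refine pderiv_eq_zero_of_supported ?_ hFmem
      rintro ⟨t, ht, h⟩
      obtain rfl : t = (i, ν) := (Sum.inl.inj h).symm
      have : (ν : ℕ) < a := ht
      omega
    have h2 : pderiv (Sum.inl (i, ν)) (pderiv (Sum.inr (j, ν)) G) = 0 := by
      refine pderiv_eq_zero_of_supported ?_ (pderiv_mem_supported _ hGmem)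
      rintro ⟨t, -, h⟩; cases h
    rw [h1, zero_mul, zero_add, h2, mul_zero]
end

section
/- Let A be a group, let K' ⊆ K be subgroups of A, let Q be a subgroup of A, and let Z be a subgroup of Q contained in the center of A. Let D be a set with a Q-action on which Z acts trivially, and let Q act on D × A by q·(d, a) = (q·d, q a) and any subgroup L ≤ A act on the right by (d, a)·l = (d, a l). Fix z ∈ D and g ∈ A, and assume that every q ∈ Q satisfying q·z = z and q ∈ g K g⁻¹ lies in Z. Then K' (K ∩ Z) is a subgroup of K, and the map k ↦ [Q-orbit of (z, g k) modulo K'] induces a well-defined bijection from the coset space K / (K'(K ∩ Z)) onto the fiber, over the class of (z, g), of the natural projection Q\(D × A)/K' → Q\(D × A)/K. In particular that fiber has cardinality |K / (K'(K ∩ Z))|. -/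
/-!
The fiber of the projection `Q\(D × A)/K' → Q\(D × A)/K` over the class of
`(z, g)` is in bijection with the coset space `K / (K'(K ∩ Z))`.
-/

open scoped Pointwise

/-- The double-orbit relation on `D × A`: `s ~ t` iff `t = (q • s₁, q s₂ k)`
for some `q ∈ Q`, `k ∈ K`.  The quotient `Quot (dcRel Q K)` is `Q\(D × A)/K`. -/
def dcRel {A : Type*} [Group A] {D : Type*} (Q : Subgroup A) [MulAction Q D]
    (K : Subgroup A) : (D × A) → (D × A) → Prop :=
  fun s t => ∃ q : Q, ∃ k ∈ K, t = (q • s.1, (q : A) * s.2 * k)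

/-- The natural projection `Q\(D × A)/K' → Q\(D × A)/K` (for `K' ≤ K`). -/
def dcProj {A : Type*} [Group A] {D : Type*} (Q : Subgroup A) [MulAction Q D]
    (K' K : Subgroup A) (hK'K : K' ≤ K) :
    Quot (dcRel (D := D) Q K') → Quot (dcRel (D := D) Q K) :=
  Quot.lift (fun s => Quot.mk (dcRel (D := D) Q K) s)
    (fun s t h => by
      obtain ⟨qq, k, hk, ht⟩ := h
      exact Quot.sound ⟨qq, k, hK'K hk, ht⟩)

theorem dcRel_equivalence {A : Type*} [Group A] {D : Type*} (Q : Subgroup A)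
    [MulAction Q D] (K : Subgroup A) : Equivalence (dcRel (D := D) Q K) := by
  constructor
  · intro s
    exact ⟨1, 1, one_mem _, by simp⟩
  · rintro s t ⟨q, k, hk, rfl⟩
    refine ⟨q⁻¹, k⁻¹, inv_mem hk, ?_⟩
    simp [smul_smul, mul_assoc]
  · rintro s t u ⟨q, k, hk, rfl⟩ ⟨q', k', hk', rfl⟩
    refine ⟨q' * q, k * k', mul_mem hk hk', ?_⟩
    simp [smul_smul, mul_assoc]

/-- Let `K' ⊆ K`, `Q`, `Z ⊆ Q` be subgroups of `A` with `Z` central in `A`, let `Q`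
act on `D` with `Z` acting trivially, and fix `z ∈ D`, `g ∈ A` such that every
`q ∈ Q` with `q • z = z` and `q ∈ gKg⁻¹` lies in `Z`.  Then `K'(K ∩ Z)` is a subgroup
of `K`, and `k ↦ [(z, gk)]` induces a well-defined bijection from `K / (K'(K ∩ Z))`
onto the fiber of `Q\(D × A)/K' → Q\(D × A)/K` over the class of `(z, g)`; in
particular that fiber has cardinality `|K / (K'(K ∩ Z))|`. -/
theorem double_coset_fiber {A : Type*} [Group A] {D : Type*}
    (Q K K' Z : Subgroup A) [MulAction Q D]
    (hK'K : K' ≤ K) (hZQ : Z ≤ Q) (hZcent : Z ≤ Subgroup.center A)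
    (hZtriv : ∀ q : Q, (q : A) ∈ Z → ∀ d : D, q • d = d)
    (z : D) (g : A)
    (hmain : ∀ q : Q, q • z = z → g⁻¹ * (q : A) * g ∈ K → (q : A) ∈ Z) :
    (∃ W : Subgroup A,
        (W : Set A) = (K' : Set A) * ((K ⊓ Z : Subgroup A) : Set A) ∧ W ≤ K) ∧
    (∃ e : Quot (fun k₁ k₂ : K =>
          ((k₁ : A)⁻¹ * (k₂ : A)) ∈ (K' : Set A) * ((K ⊓ Z : Subgroup A) : Set A)) →
          Quot (dcRel (D := D) Q K'),
        (∀ k : K, e (Quot.mk _ k) = Quot.mk _ (z, g * (k : A))) ∧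
        (∀ c, dcProj Q K' K hK'K (e c) = Quot.mk _ (z, g)) ∧
        Function.Injective e ∧
        (∀ y : Quot (dcRel (D := D) Q K'),
          dcProj Q K' K hK'K y = Quot.mk _ (z, g) → ∃ c, e c = y)) ∧
    Nat.card {y : Quot (dcRel (D := D) Q K') //
        dcProj Q K' K hK'K y = Quot.mk _ (z, g)} =
      Nat.card (Quot (fun k₁ k₂ : K =>
        ((k₁ : A)⁻¹ * (k₂ : A)) ∈ (K' : Set A) * ((K ⊓ Z : Subgroup A) : Set A))) := by
  -- central elements commute
  have hcomm : ∀ w ∈ Z, ∀ a : A, w * a = a * w := fun w hw a =>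
    ((Subgroup.mem_center_iff.mp (hZcent hw)) a).symm
  set S : Set A := (K' : Set A) * ((K ⊓ Z : Subgroup A) : Set A) with hS
  -- S is a subgroup
  have hW : ∃ W : Subgroup A, (W : Set A) = S ∧ W ≤ K := by
    refine ⟨{ carrier := S, mul_mem' := ?_, one_mem' := ?_, inv_mem' := ?_ }, rfl, ?_⟩
    · rintro a b ⟨k₁, hk₁, w₁, hw₁, rfl⟩ ⟨k₂, hk₂, w₂, hw₂, rfl⟩
      refine ⟨k₁ * k₂, mul_mem hk₁ hk₂, w₁ * w₂, mul_mem hw₁ hw₂, ?_⟩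
      exact (calc k₁ * w₁ * (k₂ * w₂) = k₁ * (w₁ * k₂) * w₂ := by group
        _ = k₁ * (k₂ * w₁) * w₂ := by rw [hcomm w₁ hw₁.2 k₂]
        _ = k₁ * k₂ * (w₁ * w₂) := by group).symm
    · exact ⟨1, one_mem _, 1, one_mem _, by simp⟩
    · rintro a ⟨k, hk, w, hw, rfl⟩
      refine ⟨k⁻¹, inv_mem hk, w⁻¹, inv_mem hw, ?_⟩
      rw [mul_inv_rev, hcomm w⁻¹ (inv_mem hw.2) k⁻¹]
    · rintro a ⟨k, hk, w, hw, rfl⟩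
      exact mul_mem (hK'K hk) hw.1
  refine ⟨hW, ?_⟩
  have hSmem : ∀ s : A, s ∈ S ↔ ∃ k ∈ K', ∃ w ∈ (K ⊓ Z : Subgroup A), s = k * w := by
    intro s
    constructor
    · rintro ⟨k, hk, w, hw, rfl⟩; exact ⟨k, hk, w, hw, rfl⟩
    · rintro ⟨k, hk, w, hw, rfl⟩; exact ⟨k, hk, w, hw, rfl⟩
  set r : K → K → Prop :=
    fun k₁ k₂ => ((k₁ : A)⁻¹ * (k₂ : A)) ∈ S with hr
  have heq := dcRel_equivalence (D := D) Q K'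
  have heqK := dcRel_equivalence (D := D) Q K
  -- well-definedness of the map
  have hwd : ∀ k₁ k₂ : K, r k₁ k₂ →
      Quot.mk (dcRel (D := D) Q K') (z, g * (k₁ : A)) =
      Quot.mk (dcRel (D := D) Q K') (z, g * (k₂ : A)) := by
    intro k₁ k₂ h
    obtain ⟨k', hk', w, hw, hmul⟩ := (hSmem _).mp h
    have hk₂ : (k₂ : A) = (k₁ : A) * (k' * w) := by
      rw [← hmul]; group
    refine Quot.sound ⟨⟨w, hZQ hw.2⟩, k', hk', ?_⟩
    have hz : (⟨w, hZQ hw.2⟩ : Q) • z = z := hZtriv _ hw.2 z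
    refine Prod.ext hz.symm ?_
    show g * (k₂ : A) = w * (g * (k₁ : A)) * k'
    calc g * (k₂ : A) = g * (k₁ : A) * k' * w := by rw [hk₂]; group
      _ = w * (g * (k₁ : A) * k') := (hcomm w hw.2 _).symm
      _ = w * (g * (k₁ : A)) * k' := by group
  -- the converse: related in `dcRel Q K'` implies related in `r`
  have hback : ∀ k₁ k₂ : K,
      Quot.mk (dcRel (D := D) Q K') (z, g * (k₁ : A)) =
      Quot.mk (dcRel (D := D) Q K') (z, g * (k₂ : A)) → r k₁ k₂ := by
    intro k₁ k₂ h
    have h' : dcRel (D := D) Q K' (z, g * (k₁ : A)) (z, g * (k₂ : A)) :=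
      (heq.eqvGen_iff).mp (Quot.eq.mp h)
    obtain ⟨q, k', hk', hpair⟩ := h'
    have hz : q • z = z := (congrArg Prod.fst hpair).symm
    have ha : g * (k₂ : A) = (q : A) * (g * (k₁ : A)) * k' :=
      congrArg Prod.snd hpair
    have hqK : g⁻¹ * (q : A) * g ∈ K := by
      have h5 : g⁻¹ * (q : A) * g = (k₂ : A) * k'⁻¹ * (k₁ : A)⁻¹ := by
        have h4 : (q : A) = g * (k₂ : A) * k'⁻¹ * (k₁ : A)⁻¹ * g⁻¹ := by
          rw [ha]; group
        rw [h4]; group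
      rw [h5]
      exact mul_mem (mul_mem k₂.2 (inv_mem (hK'K hk'))) (inv_mem k₁.2)
    have hqZ : (q : A) ∈ Z := hmain q hz hqK
    have h2 : g⁻¹ * (q : A) * g = (q : A) := by
      rw [← hcomm _ hqZ g⁻¹]
      group
    have hqKmem : (q : A) ∈ K := h2 ▸ hqK
    have h6 : (k₂ : A) = (q : A) * (k₁ : A) * k' := by
      have h7 := ha
      rw [← mul_assoc, hcomm _ hqZ g] at h7
      have h3 : g⁻¹ * (g * (k₂ : A)) = g⁻¹ * (g * (q : A) * (k₁ : A) * k') := by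
        rw [h7]
      simpa [mul_assoc] using h3
    refine (hSmem _).mpr ⟨k', hk', (q : A), ⟨hqKmem, hqZ⟩, ?_⟩
    calc (k₁ : A)⁻¹ * (k₂ : A)
        = (k₁ : A)⁻¹ * ((q : A) * (k₁ : A) * k') := by rw [h6]
      _ = (k₁ : A)⁻¹ * ((k₁ : A) * (q : A) * k') := by rw [hcomm _ hqZ (k₁ : A)]
      _ = (q : A) * k' := by group
      _ = k' * (q : A) := hcomm _ hqZ k'
  -- the map e
  let e : Quot r → Quot (dcRel (D := D) Q K') :=
    Quot.lift (fun k : K => Quot.mk _ (z, g * (k : A))) hwd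
  -- e lands in the fiber
  have hfib : ∀ c, dcProj Q K' K hK'K (e c) = Quot.mk _ (z, g) := by
    intro c
    induction c using Quot.ind with
    | _ k =>
      have he0 : e (Quot.mk r k) = Quot.mk (dcRel (D := D) Q K') (z, g * (k : A)) := rfl
      rw [he0]
      have hd : ∀ s : D × A, dcProj Q K' K hK'K (Quot.mk (dcRel (D := D) Q K') s) =
          Quot.mk (dcRel (D := D) Q K) s := fun s => rfl
      rw [hd]
      exact Quot.sound ⟨1, (k : A)⁻¹, inv_mem k.2, by simp [mul_assoc]⟩
  -- e is injective
  have hinj : Function.Injective e := by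
    intro c₁ c₂
    induction c₁ using Quot.ind with
    | _ k₁ =>
      induction c₂ using Quot.ind with
      | _ k₂ =>
        intro h
        exact Quot.sound (hback k₁ k₂ h)
  -- e is surjective onto the fiber
  have hsurj : ∀ y : Quot (dcRel (D := D) Q K'),
      dcProj Q K' K hK'K y = Quot.mk _ (z, g) → ∃ c, e c = y := by
    intro y hy
    induction y using Quot.ind with
    | _ s =>
      have hy' : Quot.mk (dcRel (D := D) Q K) s = Quot.mk _ (z, g) := hy
      have h' : dcRel (D := D) Q K (z, g) s :=
        (heqK.eqvGen_iff).mp (Quot.eq.mp hy'.symm)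
      obtain ⟨q, k, hk, rfl⟩ := h'
      refine ⟨Quot.mk r ⟨k, hk⟩, ?_⟩
      show Quot.mk (dcRel (D := D) Q K') (z, g * k) = _
      exact Quot.sound ⟨q, 1, one_mem _, by simp [mul_assoc]⟩
  refine ⟨⟨e, fun k => rfl, hfib, hinj, hsurj⟩, ?_⟩
  -- cardinality
  have hbij : Function.Bijective
      (fun c : Quot r => (⟨e c, hfib c⟩ :
        {y : Quot (dcRel (D := D) Q K') //
          dcProj Q K' K hK'K y = Quot.mk _ (z, g)})) := by
    constructor
    · intro c₁ c₂ h
      exact hinj (congrArg Subtype.val h)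
    · rintro ⟨y, hy⟩
      obtain ⟨c, hc⟩ := hsurj y hy
      exact ⟨c, Subtype.ext hc⟩
  exact (Nat.card_eq_of_bijective _ hbij).symm
end
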